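/- Let M, N be modules over a commutative ring with a perfect duality-like pairing ⟨·,·⟩ : M × N → R satisfying ⟨α,β⟩ = ε⟨β,α⟩' for a sign ε = (-1)^{r+1}, and suppose w : M → N and w : N → M satisfy w² = (-N₀)^r and ⟨wα, wβ⟩ = N₀^r ⟨α,β⟩ for a fixed integer N₀ ≥ 1 and r ≥ 0. Define the involution s̃ = (-N₀)^{-r}·(swap)∘(w⊗w) on M ⊗ N. Then s̃ is an involution, the trace-zero part of M ⊗ N (identified with End via the pairing) is the +1 eigenspace, and the scalar line is the -1 eigenspace. -/

import Mathlib

open TensorProduct in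
/-- Let `V` be 2-dimensional with a nondegenerate alternating pairing `B`, and identify
`V ⊗ V ≅ End(V)` via `v ⊗ w ↦ (u ↦ B w u • v)`.  Then the induced operator
`s̃ = φ ∘ swap ∘ φ⁻¹` on `End(V)` is an involution whose `+1`-eigenspace contains the
trace-zero endomorphisms and which negates the scalar endomorphisms. -/
theorem stmt4 (E V : Type*) [Field E] [AddCommGroup V] [Module E V]
    [FiniteDimensional E V] (hdim : Module.finrank E V = 2)
    (B : V →ₗ[E] V →ₗ[E] E)
    (halt : ∀ v, B v v = 0)
    (hnd : ∀ v, (∀ w, B v w = 0) → v = 0)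
    (φ : (V ⊗[E] V) ≃ₗ[E] Module.End E V)
    (hφ : ∀ v w u, φ (v ⊗ₜ[E] w) u = B w u • v)
    (s : Module.End E V →ₗ[E] Module.End E V)
    (hs : ∀ f : Module.End E V, s f = φ ((TensorProduct.comm E V V) (φ.symm f))) :
    (s ∘ₗ s = LinearMap.id) ∧
    (∀ f : Module.End E V, LinearMap.trace E V f = 0 → s f = f) ∧
    (∀ x : E, s (x • (1 : Module.End E V)) = -(x • (1 : Module.End E V))) := by
  -- skew-symmetry
  have hskew : ∀ v w, B w v = -B v w := by
    intro v w
    have h := halt (v + w)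
    simp only [map_add, LinearMap.add_apply, halt] at h
    linear_combination h
  -- involution
  have hinv : s ∘ₗ s = LinearMap.id := by
    ext g
    have hcc : ∀ x : V ⊗[E] V,
        (TensorProduct.comm E V V) ((TensorProduct.comm E V V) x) = x := by
      intro x
      induction x using TensorProduct.induction_on with
      | zero => simp
      | tmul v w => simp
      | add x y hx hy => simp [map_add, hx, hy]
    simp [hs, hcc]
  -- find a symplectic basis
  have h0 : Nontrivial V := by
    apply Module.nontrivial_of_finrank_pos (R := E); omega
  obtain ⟨e, he⟩ := exists_ne (0 : V)
  have : ∃ f0, B e f0 ≠ 0 := by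
    by_contra h
    push_neg at h
    exact he (hnd e h)
  obtain ⟨f0, hf0⟩ := this
  set f : V := (B e f0)⁻¹ • f0 with hfdef
  have hef : B e f = 1 := by
    simp [hfdef, inv_mul_cancel₀ hf0]
  have hfe : B f e = -1 := by rw [hskew, hef]
  have hli : LinearIndependent E ![e, f] := by
    rw [LinearIndependent.pair_iff]
    intro a c h
    have h1 := congrArg (B e) h
    have h2 := congrArg (B f) h
    simp only [map_add, map_smul, halt, hef, hfe, smul_eq_mul, mul_one, mul_zero,
      zero_add, add_zero, map_zero, mul_neg, mul_one] at h1 h2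
    exact ⟨by linear_combination -h2, h1⟩
  have hcard : Fintype.card (Fin 2) = Module.finrank E V := by simp [hdim]
  let b : Module.Basis (Fin 2) E V := basisOfLinearIndependentOfCardEqFinrank hli hcard
  have hb : ⇑b = ![e, f] := coe_basisOfLinearIndependentOfCardEqFinrank hli hcard
  have hb0 : b 0 = e := by rw [hb]; rfl
  have hb1 : b 1 = f := by rw [hb]; rfl
  -- representation of vectors
  have hrep : ∀ v : V, B e v • f - B f v • e = v := by
    intro v
    have hL : ((B e).smulRight f - (B f).smulRight e : V →ₗ[E] V) = LinearMap.id := by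
      apply b.ext
      intro i
      fin_cases i <;>
        simp [hb0, hb1, halt, hef, hfe]
    have h := LinearMap.ext_iff.mp hL v
    simp only [LinearMap.sub_apply, LinearMap.smulRight_apply, LinearMap.id_apply] at h
    exact h
  -- repr coefficients
  have hrepr : ∀ v : V, b.repr v 0 = -B f v ∧ b.repr v 1 = B e v := by
    intro v
    have hv : v = (-B f v) • b 0 + (B e v) • b 1 := by
      rw [hb0, hb1, neg_smul]
      conv_lhs => rw [← hrep v]
      abel
    constructor <;>
    · conv_lhs => rw [hv]
      simp [Finsupp.single_apply]
  -- s of the identity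
  have hone : φ.symm (1 : Module.End E V) = f ⊗ₜ[E] e - e ⊗ₜ[E] f := by
    rw [LinearEquiv.symm_apply_eq]
    ext v
    simp only [map_sub, LinearMap.sub_apply, hφ, Module.End.one_apply]
    exact (hrep v).symm
  have hs1 : s (1 : Module.End E V) = -1 := by
    rw [hs, hone]
    have : (TensorProduct.comm E V V) (f ⊗ₜ[E] e - e ⊗ₜ[E] f)
        = -(f ⊗ₜ[E] e - e ⊗ₜ[E] f) := by
      simp only [map_sub, TensorProduct.comm_tmul]
      abel
    rw [this, map_neg, ← hone]
    simp
  refine ⟨hinv, ?_, ?_⟩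
  · -- trace zero is fixed
    intro g htr
    -- decompose φ.symm g
    have hdecomp : φ.symm g = (-B f (g f)) • e ⊗ₜ[E] e + (B f (g e)) • e ⊗ₜ[E] f
        + (B e (g f)) • f ⊗ₜ[E] e + (-B e (g e)) • f ⊗ₜ[E] f := by
      rw [LinearEquiv.symm_apply_eq]
      ext v
      simp only [map_add, map_smul, LinearMap.add_apply, LinearMap.smul_apply, hφ]
      have hv : g v = B e v • g f - B f v • g e := by
        conv_lhs => rw [← hrep v]
        simp [sub_smul]
      have h1 : B e (g v) = B e v * B e (g f) - B f v * B e (g e) := by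
        rw [hv]; simp [smul_eq_mul]
      have h2 : B f (g v) = B e v * B f (g f) - B f v * B f (g e) := by
        rw [hv]; simp [smul_eq_mul]
      conv_lhs => rw [← hrep (g v)]
      rw [h1, h2]
      module
    -- trace computation
    have htrace : LinearMap.trace E V g = -B f (g e) + B e (g f) := by
      rw [LinearMap.trace_eq_matrix_trace E b g, Matrix.trace, Fin.sum_univ_two]
      simp only [Matrix.diag_apply, LinearMap.toMatrix_apply, hb0, hb1]
      rw [(hrepr (g e)).1, (hrepr (g f)).2]
    rw [htrace] at htr
    have hbc : B f (g e) = B e (g f) := by linear_combination -htr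
    have hcomm : (TensorProduct.comm E V V) (φ.symm g) = φ.symm g := by
      rw [hdecomp, hbc]
      simp only [map_add, map_smul, TensorProduct.comm_tmul]
      abel
    rw [hs, hcomm, φ.apply_symm_apply]
  · intro x
    rw [map_smul, hs1]
    simp
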